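/- arXiv:1705.03794 — 7 statements merged into one kernel-verified Lean document; each statement's English description precedes it below -/
import Mathlib

section
/- Suppose g is C¹ and there exist L > 0 and ε > 0 with Lε < 1 such that |∂₂g| ≤ L on the relevant region, and x: ℝ → ℝ^N is continuously differentiable, p-periodic, with sup_t |ẋ(t)| ≤ ε. If τ, τ₀: ℝ → ℝ both satisfy τ(t) = g(x(t), x(t-τ(t)), σ) and τ₀(t) = g(x(t), x(t-τ₀(t)), σ) for all t with sup_t |τ(t) - τ₀(t)| < ∞, then τ = τ₀. -/
/-- uniqueness of the bounded solution τ of the state-dependent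
delay equation when L·ε < 1. -/
theorem stmt_1 (N : ℕ)
    (g : EuclideanSpace ℝ (Fin N) → EuclideanSpace ℝ (Fin N) → ℝ → ℝ)
    (hg_smooth : ContDiff ℝ 1 fun q : (EuclideanSpace ℝ (Fin N)) × (EuclideanSpace ℝ (Fin N)) × ℝ =>
      g q.1 q.2.1 q.2.2)
    (L ε : ℝ) (hL : 0 < L) (hε : 0 < ε) (hLε : L * ε < 1)
    (hg_lip : ∀ (θ₁ θ₂ : EuclideanSpace ℝ (Fin N)) (σ' : ℝ),
      ‖fderiv ℝ (fun y => g θ₁ y σ') θ₂‖ ≤ L)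
    (x : ℝ → EuclideanSpace ℝ (Fin N)) (hx : ContDiff ℝ 1 x)
    (p : ℝ) (hp : 0 < p) (hper : Function.Periodic x p)
    (hx' : ∀ t : ℝ, ‖deriv x t‖ ≤ ε)
    (σ : ℝ) (τ τ₀ : ℝ → ℝ)
    (hτ : ∀ t : ℝ, τ t = g (x t) (x (t - τ t)) σ)
    (hτ₀ : ∀ t : ℝ, τ₀ t = g (x t) (x (t - τ₀ t)) σ)
    (C : ℝ) (hbdd : ∀ t : ℝ, |τ t - τ₀ t| ≤ C) :
    τ = τ₀ := by
  funext t
  have hxdiff : Differentiable ℝ x := hx.differentiable one_ne_zero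
  -- x is ε-Lipschitz
  have hxlip : ∀ a b : ℝ, ‖x a - x b‖ ≤ ε * ‖a - b‖ := by
    intro a b
    exact (convex_univ).norm_image_sub_le_of_norm_deriv_le
      (fun y _ => hxdiff y) (fun y _ => hx' y) (Set.mem_univ b) (Set.mem_univ a)
  -- g θ₁ · σ is L-Lipschitz
  have hgdiff : ∀ (θ₁ : EuclideanSpace ℝ (Fin N)),
      Differentiable ℝ (fun y => g θ₁ y σ) := by
    intro θ₁
    have h1 : Differentiable ℝ (fun q : (EuclideanSpace ℝ (Fin N)) × (EuclideanSpace ℝ (Fin N)) × ℝ =>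
        g q.1 q.2.1 q.2.2) := hg_smooth.differentiable one_ne_zero
    have h2 : Differentiable ℝ (fun y : EuclideanSpace ℝ (Fin N) => ((θ₁, y, σ) :
        (EuclideanSpace ℝ (Fin N)) × (EuclideanSpace ℝ (Fin N)) × ℝ)) := by
      fun_prop
    exact h1.comp h2
  have hglip : ∀ (θ₁ a b : EuclideanSpace ℝ (Fin N)),
      ‖g θ₁ a σ - g θ₁ b σ‖ ≤ L * ‖a - b‖ := by
    intro θ₁ a b
    exact (convex_univ).norm_image_sub_le_of_norm_fderiv_le
      (fun y _ => (hgdiff θ₁) y) (fun y _ => hg_lip θ₁ y σ) (Set.mem_univ b) (Set.mem_univ a)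
  have key : |τ t - τ₀ t| ≤ L * ε * |τ t - τ₀ t| := by
    have h1 : |τ t - τ₀ t| ≤ L * ‖x (t - τ t) - x (t - τ₀ t)‖ := by
      have := hglip (x t) (x (t - τ t)) (x (t - τ₀ t))
      rw [Real.norm_eq_abs] at this
      calc |τ t - τ₀ t| = |g (x t) (x (t - τ t)) σ - g (x t) (x (t - τ₀ t)) σ| := by
            rw [← hτ t, ← hτ₀ t]
        _ ≤ L * ‖x (t - τ t) - x (t - τ₀ t)‖ := this
    have h2 : ‖x (t - τ t) - x (t - τ₀ t)‖ ≤ ε * |τ t - τ₀ t| := by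
      have := hxlip (t - τ t) (t - τ₀ t)
      have heq : t - τ t - (t - τ₀ t) = -(τ t - τ₀ t) := by ring
      rw [heq, norm_neg, Real.norm_eq_abs] at this
      exact this
    calc |τ t - τ₀ t| ≤ L * ‖x (t - τ t) - x (t - τ₀ t)‖ := h1
      _ ≤ L * (ε * |τ t - τ₀ t|) := by
          exact mul_le_mul_of_nonneg_left h2 hL.le
      _ = L * ε * |τ t - τ₀ t| := by ring
  have habs : |τ t - τ₀ t| ≥ 0 := abs_nonneg _
  have : |τ t - τ₀ t| = 0 := by nlinarith
  have := abs_eq_zero.mp this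
  linarith
end

section
/- (Vidossich's lemma) Let X be a Banach space and v: ℝ → X a p-periodic function such that (i) v is locally integrable, (ii) there exists U ∈ L¹([0, p/2]; ℝ₊) with ‖v(t) - v(s)‖ ≤ U(t-s) for almost all s ≤ t with t - s ≤ p/2, and (iii) ∫₀^p v(t) dt = 0. Then p · ‖v‖_{L^∞} ≤ 2 ∫₀^{p/2} U(t) dt. -/
open MeasureTheory

private lemma locInt_ii {X : Type*} [NormedAddCommGroup X] {v : ℝ → X}
    (hloc : LocallyIntegrable v volume) (a b : ℝ) :
    IntervalIntegrable v volume a b := by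
  rw [intervalIntegrable_iff]
  exact (hloc.integrableOn_isCompact isCompact_uIcc).mono_set Set.Ioc_subset_Icc_self

/-- Vidossich's lemma: for a p-periodic, locally integrable
function `v` into a Banach space with mean zero over a period and modulus of
continuity `U`, we have `p * ‖v‖_{L^∞} ≤ 2 ∫₀^{p/2} U`. -/
theorem stmt_3 (X : Type*) [NormedAddCommGroup X] [NormedSpace ℝ X] [CompleteSpace X]
    (p : ℝ) (hp : 0 < p) (v : ℝ → X) (hper : Function.Periodic v p)
    (hloc : LocallyIntegrable v volume)
    (U : ℝ → ℝ) (hU_nonneg : ∀ t ∈ Set.Icc (0 : ℝ) (p / 2), 0 ≤ U t)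
    (hU_int : IntegrableOn U (Set.Icc (0 : ℝ) (p / 2)) volume)
    (hmod : ∀ᵐ q : ℝ × ℝ, q.1 ≤ q.2 → q.2 - q.1 ≤ p / 2 → ‖v q.2 - v q.1‖ ≤ U (q.2 - q.1))
    (hmean : ∫ t in (0 : ℝ)..p, v t = 0) :
    ENNReal.ofReal p * eLpNorm v ⊤ volume ≤
      ENNReal.ofReal (2 * ∫ t in (0 : ℝ)..(p / 2), U t) := by
  have hp2 : (0:ℝ) ≤ p / 2 := by linarith
  set C : ℝ := 2 * ∫ t in (0 : ℝ)..(p / 2), U t with hC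
  have hIU : (0:ℝ) ≤ ∫ t in (0 : ℝ)..(p / 2), U t :=
    intervalIntegral.integral_nonneg hp2 hU_nonneg
  have hCnn : 0 ≤ C := by positivity
  -- interval integrability of U on [0, p/2]
  have hUii : IntervalIntegrable U volume 0 (p / 2) := by
    rw [intervalIntegrable_iff_integrableOn_Ioc_of_le hp2]
    exact hU_int.mono_set Set.Ioc_subset_Icc_self
  -- the bound function on [0, p]
  set W : ℝ → ℝ := fun s => if s ≤ p / 2 then U s else U (p - s) with hW
  have hW1 : IntervalIntegrable W volume 0 (p / 2) := by
    rw [intervalIntegrable_iff_integrableOn_Ioc_of_le hp2]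
    refine ((hU_int.mono_set Set.Ioc_subset_Icc_self).congr_fun
      (fun s hs => ?_) measurableSet_Ioc)
    simp [hW, hs.2]
  have hW2 : IntervalIntegrable W volume (p / 2) p := by
    have h0 : IntervalIntegrable (fun x => U (p - x)) volume (p - 0) (p - p / 2) :=
      hUii.comp_sub_left p
    have h0' : IntervalIntegrable (fun x => U (p - x)) volume (p / 2) p := by
      have e1 : p - 0 = p := by ring
      have e2 : p - p / 2 = p / 2 := by ring
      rw [e1, e2] at h0
      exact h0.symm
    rw [intervalIntegrable_iff_integrableOn_Ioc_of_le (by linarith)] at h0' ⊢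
    refine h0'.congr_fun (fun s hs => ?_) measurableSet_Ioc
    simp [hW, not_le.2 hs.1]
  -- value of the integral of W
  have hWeq1 : (∫ s in (0:ℝ)..(p/2), W s) = ∫ s in (0:ℝ)..(p/2), U s := by
    refine intervalIntegral.integral_congr (fun s hs => ?_)
    rw [Set.uIcc_of_le hp2] at hs
    simp [hW, hs.2]
  have hWeq2 : (∫ s in (p/2)..p, W s) = ∫ s in (0:ℝ)..(p/2), U s := by
    have e : (∫ s in (p/2)..p, W s) = ∫ s in (p/2)..p, U (p - s) := by
      refine intervalIntegral.integral_congr (fun s hs => ?_)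
      rw [Set.uIcc_of_le (by linarith)] at hs
      rcases le_or_gt s (p/2) with h | h
      · have : s = p / 2 := le_antisymm h hs.1
        subst this
        rw [show p - p/2 = p/2 by ring]
        simp [hW]
      · simp [hW, not_le.2 h]
    rw [e, intervalIntegral.integral_comp_sub_left U p, show p - p/2 = p/2 by ring,
      show p - p = (0:ℝ) by ring]
  have hWint : (∫ s in (0:ℝ)..p, W s) = C := by
    rw [← intervalIntegral.integral_add_adjacent_intervals hW1 hW2, hWeq1, hWeq2, hC]
    ring
  -- transfer the modulus hypothesis via measure-preserving maps
  rw [Measure.volume_eq_prod ℝ ℝ] at hmod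
  set P : ℝ × ℝ → Prop :=
    fun q => q.1 ≤ q.2 → q.2 - q.1 ≤ p / 2 → ‖v q.2 - v q.1‖ ≤ U (q.2 - q.1) with hPdef
  have hA : ∀ᵐ z : ℝ × ℝ ∂(volume.prod volume), P (z.1, z.1 + z.2) :=
    (measurePreserving_prod_add volume volume).quasiMeasurePreserving.ae hmod
  have hB0 : ∀ᵐ z : ℝ × ℝ ∂(volume.prod volume), P (z.2, z.1) :=
    Measure.measurePreserving_swap.quasiMeasurePreserving.ae hmod
  have hB1 : ∀ᵐ z : ℝ × ℝ ∂(volume.prod volume), P (z.1 + z.2, z.1) :=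
    (measurePreserving_prod_add volume volume).quasiMeasurePreserving.ae hB0
  have hB : ∀ᵐ z : ℝ × ℝ ∂(volume.prod volume),
      P ((z.1) + ((z.2) + -p), z.1) := by
    have := (measurePreserving_add_right (volume.prod volume)
      ((0:ℝ), -p)).quasiMeasurePreserving.ae hB1
    filter_upwards [this] with z hz
    simpa using hz
  have hae := Measure.ae_ae_of_ae_prod (hA.and hB)
  -- the pointwise bound for a.e. t
  have hfin : ∀ᵐ t : ℝ, ‖v t‖ ≤ C / p := by
    filter_upwards [hae] with t ht
    -- integrability of s ↦ v (t + s) on [0, p]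
    have hgint : IntervalIntegrable (fun s => v (t + s)) volume 0 p := by
      simpa using (locInt_ii hloc t (t + p)).comp_add_left t
    have heq0 : (∫ s in (0:ℝ)..p, v (t + s)) = 0 := by
      rw [intervalIntegral.integral_comp_add_left]
      have := hper.intervalIntegral_add_eq t 0
      simpa [hmean] using this
    have key : (∫ s in (0:ℝ)..p, (v t - v (t + s))) = p • v t := by
      rw [intervalIntegral.integral_sub intervalIntegrable_const hgint, heq0, sub_zero,
        intervalIntegral.integral_const, sub_zero]
    have hb : ∀ᵐ s ∂volume.restrict (Set.uIoc (0:ℝ) p),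
        ‖v t - v (t + s)‖ ≤ W s := by
      rw [Set.uIoc_of_le hp.le]
      filter_upwards [ae_restrict_of_ae ht, ae_restrict_mem measurableSet_Ioc]
        with s hs hmem
      obtain ⟨h1s, h2s⟩ := hs
      by_cases hc : s ≤ p / 2
      · have h := h1s (by linarith [hmem.1] : t ≤ t + s)
          (by simpa using hc)
        rw [norm_sub_rev]
        simpa [hW, hc] using h
      · have h := h2s (by linarith [hmem.2] : t + (s + -p) ≤ t)
          (by push_neg at hc; simp only; linarith)
        have hv : v (t + s) = v (t + (s + -p)) := by
          have := hper (t + (s + -p))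
          rw [← this]; ring_nf
        have he : t - (t + (s + -p)) = p - s := by ring
        rw [hv]
        simp only [he] at h
        simpa [hW, hc] using h
    have hnorm : ‖∫ s in (0:ℝ)..p, (v t - v (t + s))‖ ≤ |∫ s in (0:ℝ)..p, W s| :=
      intervalIntegral.norm_integral_le_abs_of_norm_le hb (hW1.trans hW2)
    rw [key, hWint, abs_of_nonneg hCnn, norm_smul, Real.norm_eq_abs,
      abs_of_pos hp] at hnorm
    rw [le_div_iff₀ hp]
    linarith [hnorm]
  -- conclude
  have hsup : eLpNorm v ⊤ volume ≤ ENNReal.ofReal (C / p) := by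
    rw [eLpNorm_exponent_top]
    exact eLpNormEssSup_le_of_ae_bound hfin
  calc ENNReal.ofReal p * eLpNorm v ⊤ volume
      ≤ ENNReal.ofReal p * ENNReal.ofReal (C / p) := by
        exact mul_le_mul_right hsup _
    _ = ENNReal.ofReal (p * (C / p)) := (ENNReal.ofReal_mul hp.le).symm
    _ = ENNReal.ofReal C := by rw [mul_div_cancel₀ _ hp.ne']
end

section
/- Let x be a nonconstant p-periodic C¹ solution of ẋ(t) = f(x(t), x(t-τ(t)), σ) where f is Lipschitz with constant L_f in each of its first two arguments, and suppose τ is continuously differentiable with sup_t |τ̇(t)| < ∞. Then the minimal period p satisfies p ≥ 4/(L_f(2 + ‖τ̇‖_∞)). -/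
open intervalIntegral Set

/-- lower bound on the minimal period when the delay τ is C¹ with
bounded derivative: p ≥ 4/(L_f (2 + ‖τ̇‖_∞)). -/
theorem stmt_5 (N : ℕ)
    (f : EuclideanSpace ℝ (Fin N) → EuclideanSpace ℝ (Fin N) → ℝ → EuclideanSpace ℝ (Fin N))
    (Lf : ℝ) (hLf : 0 < Lf)
    (hf_lip : ∀ (θ₁ θ₂ θ₁' θ₂' : EuclideanSpace ℝ (Fin N)) (σ' : ℝ),
      ‖f θ₁ θ₂ σ' - f θ₁' θ₂' σ'‖ ≤ Lf * (‖θ₁ - θ₁'‖ + ‖θ₂ - θ₂'‖))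
    (σ : ℝ) (x : ℝ → EuclideanSpace ℝ (Fin N)) (hx : ContDiff ℝ 1 x)
    (τ : ℝ → ℝ) (hτ : ContDiff ℝ 1 τ)
    (M : ℝ) (hτ' : ∀ t : ℝ, |deriv τ t| ≤ M)
    (hsol : ∀ t : ℝ, deriv x t = f (x t) (x (t - τ t)) σ)
    (p : ℝ) (hp : 0 < p) (hper : Function.Periodic x p)
    (hnonconst : ∃ t s : ℝ, x t ≠ x s)
    (hmin : ∀ q : ℝ, 0 < q → Function.Periodic x q → p ≤ q) :
    p ≥ 4 / (Lf * (2 + M)) := by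
  have hxd : Differentiable ℝ x := hx.differentiable one_ne_zero
  have hτd : Differentiable ℝ τ := hτ.differentiable one_ne_zero
  have hvc : Continuous (deriv x) := hx.continuous_deriv le_rfl
  have hM0 : 0 ≤ M := le_trans (abs_nonneg _) (hτ' 0)
  -- derivative is periodic
  have hvper : Function.Periodic (deriv x) p := by
    intro t
    have : (fun s => x (s + p)) = x := funext fun s => hper s
    calc deriv x (t + p) = deriv (fun s => x (s + p)) t := (deriv_comp_add_const x p t).symm
      _ = deriv x t := by rw [this]
  -- maximum of ‖deriv x‖ on a period
  obtain ⟨t₀, _, hmax₀⟩ := (isCompact_Icc (a := (0:ℝ)) (b := p)).exists_isMaxOn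
    ⟨0, le_refl 0, hp.le⟩ (hvc.norm.continuousOn)
  set A : ℝ := ‖deriv x t₀‖ with hAdef
  have hmax : ∀ s : ℝ, ‖deriv x s‖ ≤ A := by
    intro s
    have hnper : Function.Periodic (fun t => ‖deriv x t‖) p := fun t => by
      simp [hvper t]
    obtain ⟨y, hy, hys⟩ := hnper.exists_mem_Ico₀ hp s
    exact hys ▸ hmax₀ ⟨hy.1, hy.2.le⟩
  have hA : 0 < A := by
    rcases lt_or_ge 0 A with h | h
    · exact h
    · exfalso
      obtain ⟨t, s, hts⟩ := hnonconst
      exact hts (is_const_of_deriv_eq_zero hxd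
        (fun u => norm_le_zero_iff.mp (le_trans (hmax u) h)) t s)
  -- x is A-Lipschitz, τ is M-Lipschitz
  have hxlip : ∀ a b : ℝ, ‖x a - x b‖ ≤ A * |a - b| := fun a b => by
    simpa [Real.norm_eq_abs] using Convex.norm_image_sub_le_of_norm_deriv_le
      (fun u _ => hxd u) (fun u _ => hmax u) convex_univ (mem_univ b) (mem_univ a)
  have hτlip : ∀ a b : ℝ, |τ a - τ b| ≤ M * |a - b| := fun a b => by
    simpa [Real.norm_eq_abs] using Convex.norm_image_sub_le_of_norm_deriv_le
      (fun u _ => hτd u) (fun u _ => by simpa [Real.norm_eq_abs] using hτ' u)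
      convex_univ (mem_univ b) (mem_univ a)
  -- deriv x is Lipschitz with constant K
  set K : ℝ := Lf * (2 + M) * A with hKdef
  have hvlip : ∀ a b : ℝ, ‖deriv x a - deriv x b‖ ≤ K * |a - b| := by
    intro a b
    rw [hsol a, hsol b]
    have h1 := hf_lip (x a) (x (a - τ a)) (x b) (x (b - τ b)) σ
    have h2 := hxlip a b
    have h3 := hxlip (a - τ a) (b - τ b)
    have h4 : |a - τ a - (b - τ b)| ≤ (1 + M) * |a - b| := by
      have := hτlip a b
      have habs : |a - τ a - (b - τ b)| ≤ |a - b| + |τ a - τ b| := by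
        have : a - τ a - (b - τ b) = (a - b) - (τ a - τ b) := by ring
        rw [this]; exact abs_sub _ _
      nlinarith
    have h3' : ‖x (a - τ a) - x (b - τ b)‖ ≤ A * ((1 + M) * |a - b|) :=
      le_trans h3 (by nlinarith [abs_nonneg (a - τ a - (b - τ b))])
    calc ‖f (x a) (x (a - τ a)) σ - f (x b) (x (b - τ b)) σ‖
        ≤ Lf * (‖x a - x b‖ + ‖x (a - τ a) - x (b - τ b)‖) := h1
      _ ≤ K * |a - b| := by rw [hKdef]; nlinarith
  -- scalar test function
  set c : EuclideanSpace ℝ (Fin N) := deriv x t₀ with hcdef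
  set g : ℝ → ℝ := fun t => inner (𝕜 := ℝ) c (deriv x t) with hgdef
  have hgc : Continuous g := continuous_const.inner hvc
  have hG : ∀ t : ℝ, HasDerivAt (fun s => inner (𝕜 := ℝ) c (x s)) (g t) t := by
    intro t
    have := (hasDerivAt_const t c).inner ℝ (hxd t).hasDerivAt
    simpa [hgdef] using this
  -- the integral of g over a period interval centered at t₀ vanishes
  have hab : t₀ - p / 2 ≤ t₀ + p / 2 := by linarith
  have hint : ∫ t in (t₀ - p / 2)..(t₀ + p / 2), g t = 0 := by
    rw [integral_eq_sub_of_hasDerivAt (fun t _ => hG t)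
      (hgc.intervalIntegrable _ _)]
    have hxeq : x (t₀ + p / 2) = x (t₀ - p / 2) := by
      have := hper (t₀ - p / 2)
      rw [← this]; ring_nf
    rw [hxeq, sub_self]
  -- pointwise lower bound
  have hglb : ∀ t : ℝ, A ^ 2 - A * K * |t - t₀| ≤ g t := by
    intro t
    have h1 : |g t - g t₀| ≤ A * (K * |t - t₀|) := by
      have : g t - g t₀ = inner (𝕜 := ℝ) c (deriv x t - deriv x t₀) := by
        simp [hgdef, inner_sub_right]
      rw [this]
      exact le_trans (abs_real_inner_le_norm c _)
        (mul_le_mul_of_nonneg_left (hvlip t t₀) (norm_nonneg c))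
    have h2 : g t₀ = A ^ 2 := real_inner_self_eq_norm_sq _
    have := abs_le.mp h1
    nlinarith
  -- integrate the lower bound
  have hcont1 : Continuous fun t : ℝ => A * K * |t - t₀| :=
    continuous_const.mul ((continuous_id.sub continuous_const).abs)
  have hcont2 : Continuous fun t : ℝ => A ^ 2 - A * K * |t - t₀| :=
    continuous_const.sub hcont1
  have hlow : ∫ t in (t₀ - p / 2)..(t₀ + p / 2), (A ^ 2 - A * K * |t - t₀|)
      ≤ ∫ t in (t₀ - p / 2)..(t₀ + p / 2), g t := by
    apply integral_mono_on hab
    · exact hcont2.intervalIntegrable _ _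
    · exact hgc.intervalIntegrable _ _
    · exact fun t _ => hglb t
  have habsint : ∫ t in (t₀ - p / 2)..(t₀ + p / 2), |t - t₀| = (p / 2) ^ 2 := by
    rw [show (∫ t in (t₀ - p / 2)..(t₀ + p / 2), |t - t₀|)
        = ∫ t in (t₀ - p / 2 - t₀)..(t₀ + p / 2 - t₀), |t| from
      integral_comp_sub_right (fun t => |t|) t₀]
    have h1 : t₀ - p / 2 - t₀ = -(p / 2) := by ring
    have h2 : t₀ + p / 2 - t₀ = p / 2 := by ring
    rw [h1, h2]
    have hsplit : (∫ t in (-(p / 2))..(0:ℝ), |t|) + (∫ t in (0:ℝ)..(p / 2), |t|)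
        = ∫ t in (-(p / 2))..(p / 2), |t| :=
      integral_add_adjacent_intervals (continuous_abs.intervalIntegrable _ _)
        (continuous_abs.intervalIntegrable _ _)
    have e1 : (∫ t in (-(p / 2))..(0:ℝ), |t|) = (p / 2) ^ 2 / 2 := by
      rw [integral_congr (g := fun t => -t) (fun t ht => by
        rw [uIcc_of_le (by linarith : -(p/2) ≤ (0:ℝ))] at ht
        exact abs_of_nonpos ht.2)]
      rw [integral_neg, integral_id]
      ring
    have e2 : (∫ t in (0:ℝ)..(p / 2), |t|) = (p / 2) ^ 2 / 2 := by
      rw [integral_congr (g := fun t => t) (fun t ht => by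
        rw [uIcc_of_le (by linarith : (0:ℝ) ≤ p/2)] at ht
        exact abs_of_nonneg ht.1)]
      rw [integral_id]
      ring
    rw [← hsplit, e1, e2]; ring
  have hcomp : ∫ t in (t₀ - p / 2)..(t₀ + p / 2), (A ^ 2 - A * K * |t - t₀|)
      = A ^ 2 * p - A * K * (p / 2) ^ 2 := by
    rw [integral_sub (intervalIntegrable_const)
      (hcont1.intervalIntegrable _ _)]
    simp only [integral_const_mul, integral_const, smul_eq_mul, habsint]
    ring
  rw [hcomp, hint] at hlow
  -- conclude
  have hpos : 0 < Lf * (2 + M) := by positivity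
  have hsub : A ^ 2 * p - A * (Lf * (2 + M) * A) * (p / 2) ^ 2 ≤ 0 := by
    rw [← hKdef]; exact hlow
  have h4 : 4 ≤ Lf * (2 + M) * p := by
    nlinarith [mul_pos (mul_pos hA hA) hp]
  rw [ge_iff_le, div_le_iff₀ hpos]
  linarith
end

section
/- Let x be a nonconstant p-periodic C¹ solution of ẋ(t) = f(x(t), x(t-τ(t)), σ), where f is L_f-Lipschitz in each of its first two arguments and τ(t) = g(x(t), x(t-τ(t)), σ) with g L_g-Lipschitz in each of its first two arguments. If ‖ẋ‖_∞ < 1/L_g, then |τ(t) - τ(s)| ≤ (2 L_g ‖ẋ‖_∞ /(1 - L_g‖ẋ‖_∞)) |t - s| for all s ≤ t, and the minimal period satisfies p ≥ 2(1 - L_g ‖ẋ‖_∞)/L_f. -/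
/-- Lipschitz estimate for the state-dependent delay τ and lower
bound on the minimal period when ‖ẋ‖_∞ < 1/L_g. -/
theorem stmt_6 (N : ℕ)
    (f : EuclideanSpace ℝ (Fin N) → EuclideanSpace ℝ (Fin N) → ℝ → EuclideanSpace ℝ (Fin N))
    (g : EuclideanSpace ℝ (Fin N) → EuclideanSpace ℝ (Fin N) → ℝ → ℝ)
    (Lf Lg : ℝ) (hLf : 0 < Lf) (hLg : 0 < Lg)
    (hf_lip : ∀ (θ₁ θ₂ θ₁' θ₂' : EuclideanSpace ℝ (Fin N)) (σ' : ℝ),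
      ‖f θ₁ θ₂ σ' - f θ₁' θ₂' σ'‖ ≤ Lf * (‖θ₁ - θ₁'‖ + ‖θ₂ - θ₂'‖))
    (hg_lip : ∀ (θ₁ θ₂ θ₁' θ₂' : EuclideanSpace ℝ (Fin N)) (σ' : ℝ),
      |g θ₁ θ₂ σ' - g θ₁' θ₂' σ'| ≤ Lg * (‖θ₁ - θ₁'‖ + ‖θ₂ - θ₂'‖))
    (σ : ℝ) (x : ℝ → EuclideanSpace ℝ (Fin N)) (hx : ContDiff ℝ 1 x)
    (τ : ℝ → ℝ)
    (hsol : ∀ t : ℝ, deriv x t = f (x t) (x (t - τ t)) σ)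
    (hτ : ∀ t : ℝ, τ t = g (x t) (x (t - τ t)) σ)
    (K : ℝ) (hK : ∀ t : ℝ, ‖deriv x t‖ ≤ K) (hK1 : K < 1 / Lg)
    (p : ℝ) (hp : 0 < p) (hper : Function.Periodic x p)
    (hnonconst : ∃ t s : ℝ, x t ≠ x s)
    (hmin : ∀ q : ℝ, 0 < q → Function.Periodic x q → p ≤ q) :
    (∀ s t : ℝ, s ≤ t → |τ t - τ s| ≤ 2 * Lg * K / (1 - Lg * K) * (t - s)) ∧
    p ≥ 2 * (1 - Lg * K) / Lf := by
  have hK0 : 0 ≤ K := le_trans (norm_nonneg _) (hK 0)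
  have hLgK : Lg * K < 1 := by
    have h := (lt_div_iff₀ hLg).mp hK1
    nlinarith
  have hdiff : Differentiable ℝ x := hx.differentiable one_ne_zero
  -- x is Lipschitz with any bound on the derivative
  have hxlip : ∀ C : ℝ, (∀ t, ‖deriv x t‖ ≤ C) → ∀ a b : ℝ, ‖x b - x a‖ ≤ C * |b - a| := by
    intro C hbd a b
    have key : ∀ a b : ℝ, a ≤ b → ‖x b - x a‖ ≤ C * (b - a) := by
      intro a b hab
      have h := norm_image_sub_le_of_norm_deriv_le_segment'
        (f := x) (f' := deriv x) (a := a) (b := b)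
        (fun t _ => (hdiff t).hasDerivAt.hasDerivWithinAt)
        (fun t _ => hbd t) b (Set.right_mem_Icc.mpr hab)
      exact h
    rcases le_total a b with hab | hba
    · rw [abs_of_nonneg (by linarith)]; exact key a b hab
    · rw [abs_of_nonpos (by linarith)]
      have := key b a hba
      rw [← norm_neg]; simpa [neg_sub] using this
  -- Lipschitz estimate for τ, parametric in the derivative bound
  have hτlip : ∀ C : ℝ, 0 ≤ C → Lg * C < 1 → (∀ t, ‖deriv x t‖ ≤ C) →
      ∀ s t : ℝ, |τ t - τ s| ≤ 2 * Lg * C / (1 - Lg * C) * |t - s| := by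
    intro C hC0 hLgC hbd s t
    have hx1 : ‖x t - x s‖ ≤ C * |t - s| := hxlip C hbd s t
    have hx2 : ‖x (t - τ t) - x (s - τ s)‖ ≤ C * |(t - τ t) - (s - τ s)| :=
      hxlip C hbd _ _
    have key : |τ t - τ s| ≤ Lg * (‖x t - x s‖ + ‖x (t - τ t) - x (s - τ s)‖) := by
      have h := hg_lip (x t) (x (t - τ t)) (x s) (x (s - τ s)) σ
      rwa [← hτ t, ← hτ s] at h
    have habs : |(t - τ t) - (s - τ s)| ≤ |t - s| + |τ t - τ s| := by
      have := abs_sub (t - s) (τ t - τ s)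
      calc |(t - τ t) - (s - τ s)| = |(t - s) - (τ t - τ s)| := by ring_nf
        _ ≤ |t - s| + |τ t - τ s| := abs_sub _ _
    have e1 : ‖x (t - τ t) - x (s - τ s)‖ ≤ C * (|t - s| + |τ t - τ s|) :=
      hx2.trans (mul_le_mul_of_nonneg_left habs hC0)
    have e2 : |τ t - τ s| ≤ Lg * (C * |t - s| + C * (|t - s| + |τ t - τ s|)) :=
      key.trans (mul_le_mul_of_nonneg_left (add_le_add hx1 e1) hLg.le)
    rw [div_mul_eq_mul_div, le_div_iff₀ (by linarith)]
    nlinarith [e2]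
  -- Lipschitz estimate for the derivative, parametric in the derivative bound
  have hylip : ∀ C : ℝ, 0 ≤ C → Lg * C < 1 → (∀ t, ‖deriv x t‖ ≤ C) →
      ∀ s t : ℝ, ‖deriv x t - deriv x s‖ ≤ 2 * Lf * C / (1 - Lg * C) * |t - s| := by
    intro C hC0 hLgC hbd s t
    have hx1 : ‖x t - x s‖ ≤ C * |t - s| := hxlip C hbd s t
    have hx2 : ‖x (t - τ t) - x (s - τ s)‖ ≤ C * |(t - τ t) - (s - τ s)| :=
      hxlip C hbd _ _
    have hτ' := hτlip C hC0 hLgC hbd s t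
    have habs : |(t - τ t) - (s - τ s)| ≤ |t - s| + |τ t - τ s| := by
      calc |(t - τ t) - (s - τ s)| = |(t - s) - (τ t - τ s)| := by ring_nf
        _ ≤ |t - s| + |τ t - τ s| := abs_sub _ _
    have key : ‖deriv x t - deriv x s‖ ≤
        Lf * (‖x t - x s‖ + ‖x (t - τ t) - x (s - τ s)‖) := by
      have h := hf_lip (x t) (x (t - τ t)) (x s) (x (s - τ s)) σ
      rwa [← hsol t, ← hsol s] at h
    have h1 : 0 < 1 - Lg * C := by linarith
    have halg : Lf * (C * |t - s| + C * (|t - s| + 2 * Lg * C / (1 - Lg * C) * |t - s|)) =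
        2 * Lf * C / (1 - Lg * C) * |t - s| := by
      linear_combination (-2 * Lf * C * |t - s|) * mul_inv_cancel₀ h1.ne'
    calc ‖deriv x t - deriv x s‖
        ≤ Lf * (‖x t - x s‖ + ‖x (t - τ t) - x (s - τ s)‖) := key
      _ ≤ Lf * (C * |t - s| + C * (|t - s| + 2 * Lg * C / (1 - Lg * C) * |t - s|)) := by
          have h2 : ‖x (t - τ t) - x (s - τ s)‖ ≤
              C * (|t - s| + 2 * Lg * C / (1 - Lg * C) * |t - s|) := by
            refine le_trans hx2 ?_
            exact mul_le_mul_of_nonneg_left (by linarith) hC0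
          have := mul_le_mul_of_nonneg_left (add_le_add hx1 h2) hLf.le
          linarith
      _ = 2 * Lf * C / (1 - Lg * C) * |t - s| := halg
  constructor
  · -- Part 1
    intro s t hst
    have h := hτlip K hK0 hLgK hK s t
    have habs : |t - s| = t - s := abs_of_nonneg (by linarith)
    rwa [habs] at h
  · -- Part 2
    have hycont : Continuous (deriv x) := hx.continuous_deriv le_rfl
    have hyper : Function.Periodic (deriv x) p := by
      intro t
      have hfun : (fun s => x (s + p)) = x := funext hper
      calc deriv x (t + p) = deriv (fun s => x (s + p)) t := (deriv_comp_add_const x p t).symm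
        _ = deriv x t := by rw [hfun]
    obtain ⟨t₀, ht₀mem, ht₀max⟩ := (isCompact_Icc (a := (0:ℝ)) (b := p)).exists_isMaxOn
      (Set.nonempty_Icc.mpr hp.le) (hycont.norm.continuousOn)
    set M := ‖deriv x t₀‖ with hMdef
    have hM : ∀ t, ‖deriv x t‖ ≤ M := by
      intro t
      have hnper : Function.Periodic (fun t => ‖deriv x t‖) p := fun t => by
        simp only [hyper t]
      obtain ⟨s, hs, hseq⟩ := hnper.exists_mem_Ico₀ hp t
      rw [hseq]
      exact ht₀max (Set.mem_Icc.mpr ⟨hs.1, hs.2.le⟩)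
    have hM0 : 0 ≤ M := norm_nonneg _
    have hMK : M ≤ K := hK t₀
    have hLgM : Lg * M < 1 :=
      lt_of_le_of_lt (mul_le_mul_of_nonneg_left hMK hLg.le) hLgK
    have hMpos : 0 < M := by
      rcases hM0.lt_or_eq with h | h
      · exact h
      · exfalso
        obtain ⟨a, b, hab⟩ := hnonconst
        apply hab
        apply is_const_of_deriv_eq_zero hdiff
        intro t
        have := hM t
        rw [← h] at this
        simpa using le_antisymm this (norm_nonneg _)
    set c : ℝ := 2 * Lf * M / (1 - Lg * M) with hcdef
    have hclip : ∀ s t : ℝ, ‖deriv x t - deriv x s‖ ≤ c * |t - s| :=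
      hylip M hM0 hLgM hM
    -- the derivative integrates to zero over a period
    have hzero : (∫ s in t₀..(t₀ + p), deriv x s) = 0 := by
      rw [intervalIntegral.integral_deriv_eq_sub (fun t _ => hdiff t)
        (hycont.intervalIntegrable _ _), hper t₀, sub_self]
    have hFint : ∀ a b : ℝ, IntervalIntegrable (fun s => deriv x t₀ - deriv x s)
        MeasureTheory.volume a b := fun a b =>
      ((continuous_const.sub hycont).intervalIntegrable a b)
    have hrep : p • deriv x t₀ = ∫ s in t₀..(t₀ + p), (deriv x t₀ - deriv x s) := by
      rw [intervalIntegral.integral_sub (intervalIntegrable_const)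
        (hycont.intervalIntegrable _ _), hzero, sub_zero,
        intervalIntegral.integral_const]
      norm_num
    set m : ℝ := t₀ + p / 2 with hmdef
    have hm1 : t₀ ≤ m := by simp [hmdef]; linarith
    have hm2 : m ≤ t₀ + p := by simp [hmdef]; linarith
    -- first half estimate
    have hI1 : ‖∫ s in t₀..m, (deriv x t₀ - deriv x s)‖ ≤ c * (p / 2) ^ 2 / 2 := by
      have hb : ∀ s ∈ Set.Icc t₀ m, ‖deriv x t₀ - deriv x s‖ ≤ c * (s - t₀) := by
        intro s hs
        have habs : |t₀ - s| = s - t₀ := by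
          rw [abs_of_nonpos (by linarith [hs.1])]; ring
        calc ‖deriv x t₀ - deriv x s‖ ≤ c * |t₀ - s| := hclip s t₀
          _ = c * (s - t₀) := by rw [habs]
      calc ‖∫ s in t₀..m, (deriv x t₀ - deriv x s)‖
          ≤ ∫ s in t₀..m, ‖deriv x t₀ - deriv x s‖ :=
            intervalIntegral.norm_integral_le_integral_norm hm1
        _ ≤ ∫ s in t₀..m, c * (s - t₀) := by
            refine intervalIntegral.integral_mono_on hm1
              ((continuous_const.sub hycont).norm.intervalIntegrable _ _)
              ((continuous_const.mul (continuous_id.sub continuous_const)).intervalIntegrable _ _)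
              hb
        _ = c * (p / 2) ^ 2 / 2 := by
            have h : (∫ s in t₀..m, c * (s - t₀)) = c * ∫ s in t₀..m, (s - t₀) := by
              simp [intervalIntegral.integral_const_mul]
            rw [h]
            have h2 : (∫ s in t₀..m, (s - t₀)) = (m - t₀) ^ 2 / 2 := by
              have h3 : (∫ s in t₀..m, (s - t₀)) =
                  (∫ s in t₀..m, s) - (∫ s in t₀..m, (t₀ : ℝ)) :=
                intervalIntegral.integral_sub intervalIntegral.intervalIntegrable_id
                  intervalIntegrable_const
              rw [h3, integral_id, intervalIntegral.integral_const, smul_eq_mul]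
              ring
            rw [h2, hmdef]
            ring
    -- second half estimate
    have hI2 : ‖∫ s in m..(t₀ + p), (deriv x t₀ - deriv x s)‖ ≤ c * (p / 2) ^ 2 / 2 := by
      have hb : ∀ s ∈ Set.Icc m (t₀ + p),
          ‖deriv x t₀ - deriv x s‖ ≤ c * ((t₀ + p) - s) := by
        intro s hs
        have hper' : deriv x t₀ = deriv x (t₀ + p) := (hyper t₀).symm
        rw [hper']
        have habs : |t₀ + p - s| = t₀ + p - s := abs_of_nonneg (by linarith [hs.2])
        calc ‖deriv x (t₀ + p) - deriv x s‖ ≤ c * |t₀ + p - s| := hclip s (t₀ + p)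
          _ = c * (t₀ + p - s) := by rw [habs]
      calc ‖∫ s in m..(t₀ + p), (deriv x t₀ - deriv x s)‖
          ≤ ∫ s in m..(t₀ + p), ‖deriv x t₀ - deriv x s‖ :=
            intervalIntegral.norm_integral_le_integral_norm hm2
        _ ≤ ∫ s in m..(t₀ + p), c * ((t₀ + p) - s) := by
            refine intervalIntegral.integral_mono_on hm2
              ((continuous_const.sub hycont).norm.intervalIntegrable _ _)
              ((continuous_const.mul (continuous_const.sub continuous_id)).intervalIntegrable _ _)
              hb
        _ = c * (p / 2) ^ 2 / 2 := by
            have h : (∫ s in m..(t₀ + p), c * ((t₀ + p) - s)) =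
                c * ∫ s in m..(t₀ + p), ((t₀ + p) - s) := by
              simp [intervalIntegral.integral_const_mul]
            rw [h]
            have h2 : (∫ s in m..(t₀ + p), ((t₀ + p) - s)) = ((t₀ + p) - m) ^ 2 / 2 := by
              have h3 : (∫ s in m..(t₀ + p), ((t₀ + p) - s)) =
                  (∫ s in m..(t₀ + p), (t₀ + p : ℝ)) - (∫ s in m..(t₀ + p), s) :=
                intervalIntegral.integral_sub intervalIntegrable_const
                  intervalIntegral.intervalIntegrable_id
              rw [h3, integral_id, intervalIntegral.integral_const, smul_eq_mul]
              ring
            rw [h2, hmdef]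
            ring
    -- combine
    have hsplit : (∫ s in t₀..(t₀ + p), (deriv x t₀ - deriv x s)) =
        (∫ s in t₀..m, (deriv x t₀ - deriv x s)) +
        (∫ s in m..(t₀ + p), (deriv x t₀ - deriv x s)) :=
      (intervalIntegral.integral_add_adjacent_intervals (hFint _ _) (hFint _ _)).symm
    have hpM : p * M ≤ c * p ^ 2 / 4 := by
      have h1 : ‖p • deriv x t₀‖ = p * M := by
        rw [norm_smul, Real.norm_eq_abs, abs_of_pos hp]
      have h2 : ‖p • deriv x t₀‖ ≤ c * (p / 2) ^ 2 / 2 + c * (p / 2) ^ 2 / 2 := by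
        rw [hrep, hsplit]
        exact le_trans (norm_add_le _ _) (add_le_add hI1 hI2)
      rw [h1] at h2
      nlinarith
    -- final algebra
    have hc1 : 0 < 1 - Lg * M := by linarith
    have hceq : c * (1 - Lg * M) = 2 * Lf * M := by
      rw [hcdef, div_mul_cancel₀ _ hc1.ne']
    have h3 : p * M * (1 - Lg * M) ≤ Lf * M * p ^ 2 / 2 := by
      calc p * M * (1 - Lg * M) ≤ c * p ^ 2 / 4 * (1 - Lg * M) :=
            mul_le_mul_of_nonneg_right hpM hc1.le
        _ = (c * (1 - Lg * M)) * p ^ 2 / 4 := by ring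
        _ = (2 * Lf * M) * p ^ 2 / 4 := by rw [hceq]
        _ = Lf * M * p ^ 2 / 2 := by ring
    have hkey : 2 * (1 - Lg * M) ≤ Lf * p := by
      nlinarith [h3, mul_pos hMpos hp]
    rw [ge_iff_le, div_le_iff₀ hLf]
    have hMK' : Lg * M ≤ Lg * K := mul_le_mul_of_nonneg_left hMK hLg.le
    linarith
end

section
/- Let μ_m, μ_p, μ_e, α_e, α_p, z̃ > 0 and h a positive even integer. The system of equations in (x, α_m) with x, α_m > 0: (μ_m+μ_p)(μ_e+μ_p)(μ_e+μ_m) = (h α_m³ /(z̃^h μ_m²)) (α_e α_p/(μ_e μ_p))^{h-1} x^{h-3} and μ_m x = α_m/(1 + ((α_e α_p/(μ_e μ_p z̃)) x)^h) has a unique positive solution (x*, α_m*). -/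
/-- unique positive solution (x*, α_m*) of the system determining
the Hopf bifurcation value of α_m. -/
theorem stmt_8 (μm μp μe αp αe zt : ℝ)
    (hμm : 0 < μm) (hμp : 0 < μp) (hμe : 0 < μe)
    (hαp : 0 < αp) (hαe : 0 < αe) (hzt : 0 < zt)
    (h : ℕ) (hh : 0 < h) (hheven : Even h) :
    ∃! q : ℝ × ℝ, 0 < q.1 ∧ 0 < q.2 ∧
      (μm + μp) * (μe + μp) * (μe + μm) =
        h * q.2 ^ 3 / (zt ^ h * μm ^ 2) * (αe * αp / (μe * μp)) ^ (h - 1) *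
          q.1 ^ ((h : ℤ) - 3) ∧
      μm * q.1 = q.2 / (1 + (αe * αp / (μe * μp * zt) * q.1) ^ h) := by
  set A := αe * αp / (μe * μp * zt) with hA
  have hA0 : 0 < A := by positivity
  set B := αe * αp / (μe * μp) with hBdef
  have hB0 : 0 < B := by positivity
  set K := (μm + μp) * (μe + μp) * (μe + μm) with hKdef
  have hK0 : 0 < K := by positivity
  have hhR : (0:ℝ) < (h:ℝ) := by exact_mod_cast hh
  set C := K * zt ^ h / ((h:ℝ) * μm * B ^ (h - 1)) with hCdef
  have hC0 : 0 < C := by positivity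
  set g : ℝ → ℝ := fun x => x ^ h * (1 + (A * x) ^ h) ^ 3 with hgdef
  have hD0 : ∀ x : ℝ, 0 ≤ x → 0 < 1 + (A * x) ^ h := by
    intro x hx
    have : 0 ≤ (A * x) ^ h := pow_nonneg (by positivity) h
    linarith
  -- strict monotonicity of g on [0, ∞)
  have hmono : StrictMonoOn g (Set.Ici 0) := by
    intro a ha b hb hab
    simp only [Set.mem_Ici] at ha hb
    have h1 : a ^ h < b ^ h := pow_lt_pow_left₀ hab ha hh.ne'
    have h2 : (A * a) ^ h < (A * b) ^ h :=
      pow_lt_pow_left₀ (by nlinarith) (by positivity) hh.ne'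
    have h3 : (1 + (A * a) ^ h) ^ 3 < (1 + (A * b) ^ h) ^ 3 :=
      pow_lt_pow_left₀ (by linarith) (le_of_lt (hD0 a ha)) (by norm_num)
    exact mul_lt_mul'' h1 h3 (pow_nonneg ha h) (le_of_lt (pow_pos (hD0 a ha) 3))
  -- key equivalence
  have key : ∀ x a : ℝ, 0 < x → 0 < a →
      ((K = (h:ℝ) * a ^ 3 / (zt ^ h * μm ^ 2) * B ^ (h - 1) * x ^ ((h:ℤ) - 3) ∧
        μm * x = a / (1 + (A * x) ^ h)) ↔
       (g x = C ∧ a = μm * x * (1 + (A * x) ^ h))) := by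
    intro x a hx ha
    have hDx : 0 < 1 + (A * x) ^ h := hD0 x hx.le
    have hzpow : x ^ ((h:ℤ) - 3) = x ^ h / x ^ 3 := by
      rw [zpow_sub₀ hx.ne', zpow_natCast]
      norm_cast
    constructor
    · rintro ⟨e1, e2⟩
      have ha' : a = μm * x * (1 + (A * x) ^ h) := by
        field_simp at e2
        rw [← e2]; ring
      refine ⟨?_, ha'⟩
      rw [ha', hzpow] at e1
      have : g x * ((h:ℝ) * μm * B ^ (h - 1)) = K * zt ^ h := by
        simp only [hgdef]
        field_simp at e1
        have key2 : (μm ^ 2 * x ^ 3) * (x ^ h * (1 + (A * x) ^ h) ^ 3 * ((h:ℝ) * μm * B ^ (h - 1)))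
            = (μm ^ 2 * x ^ 3) * (K * zt ^ h) := by linear_combination (-(μm ^ 2 * x ^ 3)) * e1
        exact mul_left_cancel₀ (by positivity) key2
      rw [hCdef, eq_div_iff (by positivity)]
      exact this
    · rintro ⟨e1, e2⟩
      have hgx : g x * ((h:ℝ) * μm * B ^ (h - 1)) = K * zt ^ h := by
        rw [e1, hCdef, div_mul_cancel₀]
        positivity
      constructor
      · rw [e2, hzpow]
        simp only [hgdef] at hgx
        field_simp
        linear_combination -hgx
      · rw [e2]
        field_simp
  -- existence of x* with g x* = C
  have hgcont : Continuous g := by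
    simp only [hgdef]; fun_prop
  obtain ⟨x, hxmem, hgx⟩ : ∃ x ∈ Set.Icc (0:ℝ) (max 1 C), g x = C := by
    have hM : (0:ℝ) ≤ max 1 C := le_trans zero_le_one (le_max_left _ _)
    have h0 : g 0 = 0 := by
      simp [hgdef, zero_pow hh.ne']
    have hgM : C ≤ g (max 1 C) := by
      have h1M : (1:ℝ) ≤ max 1 C := le_max_left _ _
      have hMh : max 1 C ≤ (max 1 C) ^ h := le_self_pow₀ h1M hh.ne'
      have ht : 0 ≤ (A * max 1 C) ^ h := pow_nonneg (mul_nonneg hA0.le hM) h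
      have hD1 : (1:ℝ) ≤ (1 + (A * max 1 C) ^ h) ^ 3 := by nlinarith [sq_nonneg ((A * max 1 C) ^ h)]
      calc C ≤ max 1 C := le_max_right _ _
        _ ≤ (max 1 C) ^ h := hMh
        _ ≤ (max 1 C) ^ h * (1 + (A * max 1 C) ^ h) ^ 3 :=
            le_mul_of_one_le_right (by positivity) hD1
    have := intermediate_value_Icc hM hgcont.continuousOn
    have hCmem : C ∈ Set.Icc (g 0) (g (max 1 C)) := by
      rw [h0]; exact ⟨hC0.le, hgM⟩
    obtain ⟨x, hx1, hx2⟩ := this hCmem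
    exact ⟨x, hx1, hx2⟩
  have hx0 : 0 < x := by
    rcases lt_or_eq_of_le hxmem.1 with h' | h'
    · exact h'
    · exfalso
      rw [← h'] at hgx
      simp [hgdef, zero_pow hh.ne'] at hgx
      exact absurd hgx.symm hC0.ne'
  have hDx : 0 < 1 + (A * x) ^ h := hD0 x hx0.le
  refine ⟨(x, μm * x * (1 + (A * x) ^ h)), ⟨hx0, by positivity, ?_⟩, ?_⟩
  · exact ((key x _ hx0 (by positivity)).mpr ⟨hgx, rfl⟩)
  · rintro ⟨y, b⟩ ⟨hy0, hb0, he⟩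
    have := (key y b hy0 hb0).mp he
    have hyx : y = x := by
      apply hmono.injOn (Set.mem_Ici.mpr hy0.le) (Set.mem_Ici.mpr hx0.le)
      rw [this.1, hgx]
    simp only [Prod.mk.injEq]
    exact ⟨hyx, by rw [this.2, hyx]⟩
end

section
/- Let μ_m, μ_p, μ_e > 0 and c₀ > 0. The cubic polynomial P(λ) = (λ+μ_m)(λ+μ_p)(λ+μ_e) + c₀ over ℂ has purely imaginary roots λ = ±iv with v > 0 if and only if c₀ = (μ_m+μ_p)(μ_e+μ_p)(μ_e+μ_m) and v² = μ_m μ_p + μ_e(μ_m + μ_p). -/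
open Complex

/-- the cubic (λ+μ_m)(λ+μ_p)(λ+μ_e) + c₀ has purely imaginary
roots ±iv (v > 0) iff c₀ = (μ_m+μ_p)(μ_e+μ_p)(μ_e+μ_m) and
v² = μ_mμ_p + μ_e(μ_m+μ_p). -/
theorem stmt_9 (μm μp μe c₀ : ℝ)
    (hμm : 0 < μm) (hμp : 0 < μp) (hμe : 0 < μe) (hc₀ : 0 < c₀)
    (v : ℝ) (hv : 0 < v) :
    (((v : ℂ) * I + μm) * ((v : ℂ) * I + μp) * ((v : ℂ) * I + μe) + c₀ = 0 ∧
     (-(v : ℂ) * I + μm) * (-(v : ℂ) * I + μp) * (-(v : ℂ) * I + μe) + c₀ = 0) ↔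
    (c₀ = (μm + μp) * (μe + μp) * (μe + μm) ∧
     v ^ 2 = μm * μp + μe * (μm + μp)) := by
  simp only [Complex.ext_iff]
  push_cast
  simp only [Complex.add_re, Complex.add_im, Complex.mul_re, Complex.mul_im,
    Complex.ofReal_re, Complex.ofReal_im, Complex.I_re, Complex.I_im,
    Complex.zero_re, Complex.zero_im, Complex.neg_re, Complex.neg_im]
  ring_nf
  constructor
  · rintro ⟨⟨h1, h2⟩, _⟩
    have hv2 : v ^ 2 = μm * μp + μe * (μm + μp) := by
      have := hv.ne'
      nlinarith [sq_nonneg v, hv]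
    exact ⟨by nlinarith, by linarith [hv2]⟩
  · rintro ⟨h1, h2⟩
    refine ⟨⟨by nlinarith, by nlinarith⟩, by nlinarith, by nlinarith⟩
end

section
/- Let f₀: ℝ³ × ℝ³ → ℝ³ be defined by f₀(θ₁, θ₂) = (-μ_m x₁ + α_m/(1+(z₂/z̃)^h), -μ_p y₁ + α_p x₂, -μ_e z₁ + α_e y₂) where θ₁ = (x₁,y₁,z₁), θ₂ = (x₂,y₂,z₂). Then f₀ satisfies |f₀(θ₁,θ₂) - f₀(θ̄₁,θ̄₂)| ≤ L_f(|θ₁-θ̄₁| + |θ₂-θ̄₂|) with L_f = max{μ_m, μ_p, μ_e, α_p, α_e, α_m h₀/z̃}, where h₀ = h(1-2/(h+1))^{(h-1)/h}/(1+(h-1)/(h+1))². -/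
lemma stmt14_core (h : ℕ) (hh2 : 2 ≤ h) (u : ℝ) (hu : 0 ≤ u) :
    u ^ (((h:ℝ)-1)/h) * (1 + ((h:ℝ)-1)/((h:ℝ)+1)) ^ 2
      ≤ (((h:ℝ)-1)/((h:ℝ)+1)) ^ (((h:ℝ)-1)/h) * (1 + u) ^ 2 := by
  have hh2' : (2:ℝ) ≤ (h:ℝ) := by exact_mod_cast hh2
  set p : ℝ := ((h:ℝ)-1)/h with hp
  set c : ℝ := ((h:ℝ)-1)/((h:ℝ)+1) with hc
  have hhpos : (0:ℝ) < h := by linarith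
  have hnum : (0:ℝ) < (h:ℝ) - 1 := by linarith
  have hc0 : 0 < c := div_pos hnum (by linarith)
  have hp0 : 0 < p := div_pos hnum hhpos
  have hp1 : p ≤ 1 := by rw [hp, div_le_one hhpos]; linarith
  have hx : (0:ℝ) ≤ u / c := div_nonneg hu hc0.le
  have hB : (u / c) ^ (p/2) ≤ 1 + (p/2) * (u/c - 1) := by
    have := rpow_one_add_le_one_add_mul_self (s := u/c - 1)
      (by linarith) (p := p/2) (by linarith) (by linarith)
    simpa using this
  have hlin : 1 + (p/2) * (u/c - 1) = (1 + u) / (1 + c) := by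
    rw [hp, hc]
    have h1 : (h:ℝ) ≠ 0 := ne_of_gt hhpos
    have h2 : (h:ℝ) - 1 ≠ 0 := ne_of_gt hnum
    have h3 : (h:ℝ) + 1 ≠ 0 := by positivity
    field_simp
    ring
  have h1c : 0 < 1 + c := by linarith
  have hB2 : (u / c) ^ (p/2) ≤ (1 + u) / (1 + c) := hB.trans_eq hlin
  have hsq : ((u/c) ^ (p/2)) ^ 2 ≤ ((1+u)/(1+c)) ^ 2 := by
    have hn : 0 ≤ (u/c) ^ (p/2) := Real.rpow_nonneg hx _
    nlinarith [hB2, hn]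
  have hrw : ((u/c) ^ (p/2)) ^ 2 = (u/c) ^ p := by
    rw [← Real.rpow_natCast ((u/c) ^ (p/2)) 2, ← Real.rpow_mul hx]
    norm_num
  rw [hrw, Real.div_rpow hu hc0.le, div_pow] at hsq
  have hcp : 0 < c ^ p := Real.rpow_pos_of_pos hc0 _
  rw [div_le_div_iff₀ (by positivity) (by positivity)] at hsq
  linarith [hsq]

lemma stmt14_point (h : ℕ) (hh2 : 2 ≤ h) (s : ℝ) (hs : 0 ≤ s) :
    (h:ℝ) * s ^ (h-1) / (1 + s^h) ^ 2
      ≤ (h:ℝ) * (((h:ℝ)-1)/((h:ℝ)+1)) ^ (((h:ℝ)-1)/h) / (1 + ((h:ℝ)-1)/((h:ℝ)+1)) ^ 2 := by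
  have hh2' : (2:ℝ) ≤ (h:ℝ) := by exact_mod_cast hh2
  have hhpos : (0:ℝ) < h := by linarith
  have hnum : (0:ℝ) < (h:ℝ) - 1 := by linarith
  set c : ℝ := ((h:ℝ)-1)/((h:ℝ)+1) with hc
  have hc0 : 0 < c := div_pos hnum (by linarith)
  have key := stmt14_core h hh2 (s^h) (pow_nonneg hs h)
  have hrw : (s^h : ℝ) ^ (((h:ℝ)-1)/h) = s ^ (h-1) := by
    rw [← Real.rpow_natCast s h, ← Real.rpow_mul hs,
      mul_div_cancel₀ _ (ne_of_gt hhpos)]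
    rw [show ((h:ℝ) - 1) = ((h - 1 : ℕ) : ℝ) by
      push_cast [Nat.cast_sub (by omega : 1 ≤ h)]; ring]
    exact Real.rpow_natCast s (h-1)
  rw [hrw] at key
  have hden : (0:ℝ) < (1 + s^h) ^ 2 := by positivity
  have hden2 : (0:ℝ) < (1 + c) ^ 2 := by positivity
  rw [div_le_div_iff₀ hden hden2]
  nlinarith [key, hhpos]

lemma stmt14_lip (αm zt : ℝ) (hαm : 0 < αm) (hzt : 0 < zt)
    (h : ℕ) (hh2 : 2 ≤ h) (hheven : Even h) (a b : ℝ) :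
    |αm / (1 + (a/zt)^h) - αm / (1 + (b/zt)^h)|
      ≤ (αm * ((h:ℝ) * (((h:ℝ)-1)/((h:ℝ)+1)) ^ (((h:ℝ)-1)/h) /
          (1 + ((h:ℝ)-1)/((h:ℝ)+1)) ^ 2) / zt) * |a - b| := by
  have hh2' : (2:ℝ) ≤ (h:ℝ) := by exact_mod_cast hh2
  have hnum : (0:ℝ) < (h:ℝ) - 1 := by linarith
  set c : ℝ := ((h:ℝ)-1)/((h:ℝ)+1) with hc
  have hc0 : 0 < c := div_pos hnum (by linarith)
  set g : ℝ → ℝ := fun z => αm / (1 + (z/zt)^h) with hg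
  have hpos : ∀ z : ℝ, (0:ℝ) < 1 + (z/zt)^h := fun z => by
    have := hheven.pow_nonneg (z/zt); linarith
  have hder : ∀ z : ℝ, HasDerivAt g
      (αm * (-((h:ℝ) * (z/zt)^(h-1) * (1/zt)) / (1 + (z/zt)^h)^2)) z := by
    intro z
    have h1 : HasDerivAt (fun x : ℝ => x / zt) (1/zt) z := by
      simpa using (hasDerivAt_id z).div_const zt
    have h2 : HasDerivAt (fun x : ℝ => 1 + (x/zt)^h)
        ((h:ℝ) * (z/zt)^(h-1) * (1/zt)) z := (h1.pow h).const_add 1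
    have h3 := (h2.inv (ne_of_gt (hpos z))).const_mul αm
    simpa [hg, div_eq_mul_inv, mul_comm] using h3
  apply Convex.norm_image_sub_le_of_norm_deriv_le (s := Set.univ)
    (fun x _ => (hder x).differentiableAt)
    (fun x _ => ?_) convex_univ trivial trivial
  rw [(hder x).deriv]
  have hb := stmt14_point h hh2 |x/zt| (abs_nonneg _)
  rw [hheven.pow_abs] at hb
  have habs : |αm * (-((h:ℝ) * (x/zt)^(h-1) * (1/zt)) / (1 + (x/zt)^h)^2)|
      = αm * ((h:ℝ) * |x/zt| ^ (h-1) * (1/zt)) / (1 + (x/zt)^h)^2 := by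
    rw [abs_mul, abs_div, abs_neg, abs_of_pos hαm, abs_of_pos (pow_pos (hpos x) 2),
      abs_mul, abs_mul, abs_pow, Nat.abs_cast, abs_of_pos (one_div_pos.mpr hzt)]
    ring
  rw [Real.norm_eq_abs, habs]
  have h1 : αm * ((h:ℝ) * |x/zt| ^ (h-1) * (1/zt)) / (1 + (x/zt)^h)^2
      = (αm / zt) * ((h:ℝ) * |x/zt| ^ (h-1) / (1 + (x/zt)^h)^2) := by ring
  rw [h1]
  have h2 : αm * ((h:ℝ) * c ^ (((h:ℝ)-1)/h) / (1 + c)^2) / zt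
      = (αm / zt) * ((h:ℝ) * c ^ (((h:ℝ)-1)/h) / (1 + c)^2) := by ring
  rw [h2]
  exact mul_le_mul_of_nonneg_left hb (by positivity)

lemma stmt14_norm3 (x y : EuclideanSpace ℝ (Fin 3)) (L : ℝ) (hL : 0 ≤ L)
    (hs : x 0^2 + x 1^2 + x 2^2 ≤ L^2 * (y 0^2 + y 1^2 + y 2^2)) : ‖x‖ ≤ L * ‖y‖ := by
  rw [EuclideanSpace.norm_eq, EuclideanSpace.norm_eq]
  simp only [Fin.sum_univ_three, Real.norm_eq_abs, sq_abs]
  calc Real.sqrt (x 0^2 + x 1^2 + x 2^2)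
      ≤ Real.sqrt (L^2 * (y 0^2 + y 1^2 + y 2^2)) := Real.sqrt_le_sqrt hs
    _ = L * Real.sqrt (y 0^2 + y 1^2 + y 2^2) := by
        rw [Real.sqrt_mul (sq_nonneg L), Real.sqrt_sq hL]

/-- Lipschitz constant for the right-hand side of the extended
Goodwin system, in the Euclidean norm on ℝ³. -/
theorem stmt_14 (μm μp μe αm αp αe zt : ℝ)
    (hμm : 0 < μm) (hμp : 0 < μp) (hμe : 0 < μe)
    (hαm : 0 < αm) (hαp : 0 < αp) (hαe : 0 < αe) (hzt : 0 < zt)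
    (h : ℕ) (hh : 0 < h) (hheven : Even h)
    (f₀ : EuclideanSpace ℝ (Fin 3) → EuclideanSpace ℝ (Fin 3) → EuclideanSpace ℝ (Fin 3))
    (hf₀ : ∀ θ₁ θ₂ : EuclideanSpace ℝ (Fin 3),
      f₀ θ₁ θ₂ 0 = -μm * θ₁ 0 + αm / (1 + (θ₂ 2 / zt) ^ h) ∧
      f₀ θ₁ θ₂ 1 = -μp * θ₁ 1 + αp * θ₂ 0 ∧
      f₀ θ₁ θ₂ 2 = -μe * θ₁ 2 + αe * θ₂ 1) :
    ∀ θ₁ θ₂ θ₁' θ₂' : EuclideanSpace ℝ (Fin 3),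
      ‖f₀ θ₁ θ₂ - f₀ θ₁' θ₂'‖ ≤
        max μm (max μp (max μe (max αp (max αe
            (αm * ((h : ℝ) * (1 - 2 / ((h : ℝ) + 1)) ^ (((h : ℝ) - 1) / h) /
              (1 + ((h : ℝ) - 1) / ((h : ℝ) + 1)) ^ 2) / zt))))) *
          (‖θ₁ - θ₁'‖ + ‖θ₂ - θ₂'‖) := by
  intro θ₁ θ₂ θ₁' θ₂'
  have hh2 : 2 ≤ h := by obtain ⟨k, hk⟩ := hheven; omega
  have hh2' : (2:ℝ) ≤ (h:ℝ) := by exact_mod_cast hh2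
  have hbase : (1 : ℝ) - 2 / ((h:ℝ) + 1) = ((h:ℝ)-1)/((h:ℝ)+1) := by
    have : (h:ℝ) + 1 ≠ 0 := by positivity
    field_simp
    ring
  rw [hbase]
  set K : ℝ := αm * ((h : ℝ) * (((h:ℝ)-1)/((h:ℝ)+1)) ^ (((h : ℝ) - 1) / h) /
      (1 + ((h : ℝ) - 1) / ((h : ℝ) + 1)) ^ 2) / zt with hK
  set L : ℝ := max μm (max μp (max μe (max αp (max αe K)))) with hL
  have hμmL : μm ≤ L := le_max_left _ _
  have hμpL : μp ≤ L := le_trans (le_max_left _ _) (le_max_right _ _)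
  have hμeL : μe ≤ L := le_trans (le_trans (le_max_left _ _) (le_max_right _ _)) (le_max_right _ _)
  have hαpL : αp ≤ L := le_trans (le_trans (le_trans (le_max_left _ _) (le_max_right _ _))
    (le_max_right _ _)) (le_max_right _ _)
  have hαeL : αe ≤ L := le_trans (le_trans (le_trans (le_trans (le_max_left _ _)
    (le_max_right _ _)) (le_max_right _ _)) (le_max_right _ _)) (le_max_right _ _)
  have hKL : K ≤ L := le_trans (le_trans (le_trans (le_trans (le_max_right _ _)
    (le_max_right _ _)) (le_max_right _ _)) (le_max_right _ _)) (le_max_right _ _)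
  have hL0 : 0 ≤ L := le_trans hμm.le hμmL
  clear_value L
  set u : EuclideanSpace ℝ (Fin 3) := (WithLp.equiv 2 (Fin 3 → ℝ)).symm
    ![-μm * (θ₁ 0 - θ₁' 0), -μp * (θ₁ 1 - θ₁' 1), -μe * (θ₁ 2 - θ₁' 2)] with hu
  set v : EuclideanSpace ℝ (Fin 3) := (WithLp.equiv 2 (Fin 3 → ℝ)).symm
    ![αm / (1 + (θ₂ 2 / zt) ^ h) - αm / (1 + (θ₂' 2 / zt) ^ h),
      αp * (θ₂ 0 - θ₂' 0), αe * (θ₂ 1 - θ₂' 1)] with hv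
  have hu0 : u 0 = -μm * (θ₁ 0 - θ₁' 0) := rfl
  have hu1 : u 1 = -μp * (θ₁ 1 - θ₁' 1) := rfl
  have hu2 : u 2 = -μe * (θ₁ 2 - θ₁' 2) := rfl
  have hv0 : v 0 = αm / (1 + (θ₂ 2 / zt) ^ h) - αm / (1 + (θ₂' 2 / zt) ^ h) := rfl
  have hv1 : v 1 = αp * (θ₂ 0 - θ₂' 0) := rfl
  have hv2 : v 2 = αe * (θ₂ 1 - θ₂' 1) := rfl
  clear_value u v
  have hD : f₀ θ₁ θ₂ - f₀ θ₁' θ₂' = u + v := by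
    ext i
    fin_cases i
    · show f₀ θ₁ θ₂ 0 - f₀ θ₁' θ₂' 0 = u 0 + v 0
      rw [(hf₀ θ₁ θ₂).1, (hf₀ θ₁' θ₂').1, hu0, hv0]; ring
    · show f₀ θ₁ θ₂ 1 - f₀ θ₁' θ₂' 1 = u 1 + v 1
      rw [(hf₀ θ₁ θ₂).2.1, (hf₀ θ₁' θ₂').2.1, hu1, hv1]; ring
    · show f₀ θ₁ θ₂ 2 - f₀ θ₁' θ₂' 2 = u 2 + v 2
      rw [(hf₀ θ₁ θ₂).2.2, (hf₀ θ₁' θ₂').2.2, hu2, hv2]; ring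
  have hun : ‖u‖ ≤ L * ‖θ₁ - θ₁'‖ := by
    apply stmt14_norm3 _ _ _ hL0
    have e0 : (θ₁ - θ₁') 0 = θ₁ 0 - θ₁' 0 := rfl
    have e1 : (θ₁ - θ₁') 1 = θ₁ 1 - θ₁' 1 := rfl
    have e2 : (θ₁ - θ₁') 2 = θ₁ 2 - θ₁' 2 := rfl
    rw [hu0, hu1, hu2, e0, e1, e2]
    have t1 : μm^2 ≤ L^2 := pow_le_pow_left₀ hμm.le hμmL 2
    have t2 : μp^2 ≤ L^2 := pow_le_pow_left₀ hμp.le hμpL 2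
    have t3 : μe^2 ≤ L^2 := pow_le_pow_left₀ hμe.le hμeL 2
    have s1 := mul_le_mul_of_nonneg_right t1 (sq_nonneg (θ₁ 0 - θ₁' 0))
    have s2 := mul_le_mul_of_nonneg_right t2 (sq_nonneg (θ₁ 1 - θ₁' 1))
    have s3 := mul_le_mul_of_nonneg_right t3 (sq_nonneg (θ₁ 2 - θ₁' 2))
    ring_nf at s1 s2 s3 ⊢
    linarith [s1, s2, s3]
  have hvn : ‖v‖ ≤ L * ‖θ₂ - θ₂'‖ := by
    apply stmt14_norm3 _ _ _ hL0
    have e0 : (θ₂ - θ₂') 0 = θ₂ 0 - θ₂' 0 := rfl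
    have e1 : (θ₂ - θ₂') 1 = θ₂ 1 - θ₂' 1 := rfl
    have e2 : (θ₂ - θ₂') 2 = θ₂ 2 - θ₂' 2 := rfl
    rw [hv0, hv1, hv2, e0, e1, e2]
    have hlip := stmt14_lip αm zt hαm hzt h hh2 hheven (θ₂ 2) (θ₂' 2)
    rw [← hK] at hlip
    have hlip' : |αm / (1 + (θ₂ 2 / zt) ^ h) - αm / (1 + (θ₂' 2 / zt) ^ h)|
        ≤ L * |θ₂ 2 - θ₂' 2| :=
      hlip.trans (mul_le_mul_of_nonneg_right hKL (abs_nonneg _))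
    set w : ℝ := αm / (1 + (θ₂ 2 / zt) ^ h) - αm / (1 + (θ₂' 2 / zt) ^ h) with hw
    have t0 : w^2 ≤ L^2 * (θ₂ 2 - θ₂' 2)^2 := by
      have h1 : w^2 ≤ (L * |θ₂ 2 - θ₂' 2|)^2 := by
        rw [sq, sq]
        calc w * w = |w| * |w| := (abs_mul_abs_self w).symm
          _ ≤ (L * |θ₂ 2 - θ₂' 2|) * (L * |θ₂ 2 - θ₂' 2|) :=
            mul_self_le_mul_self (abs_nonneg w) hlip'
      calc w^2 ≤ (L * |θ₂ 2 - θ₂' 2|)^2 := h1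
        _ = L^2 * (θ₂ 2 - θ₂' 2)^2 := by rw [mul_pow, sq_abs]
    have t1 : αp^2 ≤ L^2 := pow_le_pow_left₀ hαp.le hαpL 2
    have t2 : αe^2 ≤ L^2 := pow_le_pow_left₀ hαe.le hαeL 2
    have s1 := mul_le_mul_of_nonneg_right t1 (sq_nonneg (θ₂ 0 - θ₂' 0))
    have s2 := mul_le_mul_of_nonneg_right t2 (sq_nonneg (θ₂ 1 - θ₂' 1))
    ring_nf at t0 s1 s2 ⊢
    linarith [t0, s1, s2]
  calc ‖f₀ θ₁ θ₂ - f₀ θ₁' θ₂'‖ = ‖u + v‖ := by rw [hD]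
    _ ≤ ‖u‖ + ‖v‖ := norm_add_le u v
    _ ≤ L * ‖θ₁ - θ₁'‖ + L * ‖θ₂ - θ₂'‖ := add_le_add hun hvn
    _ = L * (‖θ₁ - θ₁'‖ + ‖θ₂ - θ₂'‖) := by ring
end
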